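/- arXiv:2312.03473 — 2 statements merged into one kernel-verified Lean document; each statement's English description precedes it below -/
import Mathlib

section
/- Let K ⊆ ℝ^n be a locally anti-blocking convex body, let I ⊆ {1,…,n} and E = span{e_i : i ∈ I}. Let σ, τ ∈ {−1,1}^n be sign vectors with σ_i = τ_i for all i ∈ I, and write K_σ = K ∩ σℝ_+^n, K_τ = K ∩ τℝ_+^n. Then P_E K_σ = P_E K_τ, where P_E denotes orthogonal projection onto E. -/
open MeasureTheory
open scoped Pointwise

noncomputable section

/-- The nonnegative orthant `ℝ₊ⁿ`. -/
def nonnegOrthant (n : ℕ) : Set (EuclideanSpace ℝ (Fin n)) := {x | ∀ i, 0 ≤ x i}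

/-- The sign `±1` associated to a boolean. -/
def sgn (b : Bool) : ℝ := if b then 1 else -1

/-- The closed orthant `σ ℝ₊ⁿ` corresponding to a sign vector `σ ∈ {-1,1}ⁿ`. -/
def signedOrthant {n : ℕ} (σ : Fin n → Bool) : Set (EuclideanSpace ℝ (Fin n)) :=
  {x | ∀ i, 0 ≤ sgn (σ i) * x i}

/-- Coordinatewise reflection `σ S = {(σ₁x₁, …, σₙxₙ) : x ∈ S}`. -/
def sigmaAct {n : ℕ} (σ : Fin n → Bool) (S : Set (EuclideanSpace ℝ (Fin n))) :
    Set (EuclideanSpace ℝ (Fin n)) :=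
  (fun x : EuclideanSpace ℝ (Fin n) => (WithLp.toLp 2 (fun i => sgn (σ i) * x i) : EuclideanSpace ℝ (Fin n))) '' S

/-- Orthogonal projection onto the coordinate subspace `span {eᵢ : i ∈ I}`. -/
def coordProj {n : ℕ} (I : Finset (Fin n)) (x : EuclideanSpace ℝ (Fin n)) :
    EuclideanSpace ℝ (Fin n) :=
  (WithLp.toLp 2 (fun i => if i ∈ I then x i else 0) : EuclideanSpace ℝ (Fin n))

/-- The coordinate subspace `span {eᵢ : i ∈ I}`, as a set. -/
def coordSubspace {n : ℕ} (I : Finset (Fin n)) : Set (EuclideanSpace ℝ (Fin n)) :=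
  {x | ∀ i ∉ I, x i = 0}

/-- A set `K ⊆ ℝ₊ⁿ` is anti-blocking if for every coordinate subspace `E` the orthogonal
projection `P_E K` equals the section `K ∩ E`. -/
def IsAntiBlocking {n : ℕ} (K : Set (EuclideanSpace ℝ (Fin n))) : Prop :=
  K ⊆ nonnegOrthant n ∧ ∀ I : Finset (Fin n), coordProj I '' K = K ∩ coordSubspace I

/-- `K` is locally anti-blocking if `(σK) ∩ ℝ₊ⁿ` is anti-blocking for every sign vector `σ`. -/
def IsLocallyAntiBlocking {n : ℕ} (K : Set (EuclideanSpace ℝ (Fin n))) : Prop :=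
  ∀ σ : Fin n → Bool, IsAntiBlocking (sigmaAct σ K ∩ nonnegOrthant n)

/-- The coordinate simplex `conv{0, e₁, …}` in the Euclidean space with coordinates `ι`. -/
def coordSimplex (ι : Type*) [Fintype ι] [DecidableEq ι] : Set (EuclideanSpace ℝ ι) :=
  convexHull ℝ (insert 0 (Set.range fun i : ι => EuclideanSpace.single i (1 : ℝ)))

/-- Restriction to the coordinates in `I`, realizing the orthogonal projection onto
`span {eᵢ : i ∈ I}` as a map onto a `#I`-dimensional Euclidean space (so that volumes of
images compute lower-dimensional Lebesgue measures of coordinate projections). -/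
def restrictCoords {n : ℕ} (I : Finset (Fin n)) (x : EuclideanSpace ℝ (Fin n)) :
    EuclideanSpace ℝ ↥I :=
  (WithLp.toLp 2 (fun i : ↥I => x i) : EuclideanSpace ℝ ↥I)

lemma sgn_mul_self (b : Bool) : sgn b * sgn b = 1 := by cases b <;> norm_num [sgn]

lemma coordProj_subset_aux {n : ℕ} (K : Set (EuclideanSpace ℝ (Fin n)))
    (hKlab : IsLocallyAntiBlocking K)
    (I : Finset (Fin n)) (σ τ : Fin n → Bool) (hστ : ∀ i ∈ I, σ i = τ i) :
    coordProj I '' (K ∩ signedOrthant σ) ⊆ coordProj I '' (K ∩ signedOrthant τ) := by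
  rintro _ ⟨x, ⟨hxK, hxσ⟩, rfl⟩
  -- the reflected point
  set z : EuclideanSpace ℝ (Fin n) := WithLp.toLp 2 (fun i => sgn (σ i) * x i) with hz
  have hzL : z ∈ sigmaAct σ K ∩ nonnegOrthant n := by
    exact ⟨⟨x, hxK, rfl⟩, fun i => hxσ i⟩
  have hAB := (hKlab σ).2 I
  have hmem : coordProj I z ∈ sigmaAct σ K ∩ nonnegOrthant n := by
    have : coordProj I z ∈ coordProj I '' (sigmaAct σ K ∩ nonnegOrthant n) :=
      ⟨z, hzL, rfl⟩
    rw [hAB] at this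
    exact this.1
  obtain ⟨k, hkK, hk⟩ := hmem.1
  -- k equals coordProj I x
  have hkx : k = coordProj I x := by
    ext i
    have hki : sgn (σ i) * k i = coordProj I z i := congrArg (fun v => v i) hk
    have h1 : k i = sgn (σ i) * coordProj I z i := by
      have := congrArg (fun t => sgn (σ i) * t) hki
      simpa [← mul_assoc, sgn_mul_self] using this
    by_cases hiI : i ∈ I
    · simp [h1, coordProj, hiI, hz, ← mul_assoc, sgn_mul_self]
    · simp [h1, coordProj, hiI]
  have hPK : coordProj I x ∈ K := hkx ▸ hkK
  refine ⟨coordProj I x, ⟨hPK, ?_⟩, ?_⟩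
  · intro i
    by_cases hiI : i ∈ I
    · simpa [coordProj, hiI, hστ i hiI] using hxσ i
    · simp [coordProj, hiI]
  · ext i
    by_cases hiI : i ∈ I <;> simp [coordProj, hiI]

/-- For a locally anti-blocking body `K` and sign vectors `σ, τ` agreeing on `I`,
the projections of `K_σ` and `K_τ` onto `E = span{eᵢ : i ∈ I}` coincide. -/
theorem coordProj_orthant_piece_eq
    (n : ℕ) (K : Set (EuclideanSpace ℝ (Fin n)))
    (hKconv : Convex ℝ K) (hKcomp : IsCompact K) (hKne : K.Nonempty)
    (hKlab : IsLocallyAntiBlocking K)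
    (I : Finset (Fin n)) (σ τ : Fin n → Bool) (hστ : ∀ i ∈ I, σ i = τ i) :
    coordProj I '' (K ∩ signedOrthant σ) = coordProj I '' (K ∩ signedOrthant τ) :=
  Set.Subset.antisymm (coordProj_subset_aux K hKlab I σ τ hστ)
    (coordProj_subset_aux K hKlab I τ σ fun i hi => (hστ i hi).symm)
end
end

section
/- Let α_1 ≥ α_2 ≥ … ≥ α_n ≥ 0, let K = conv{0, α_1 e_1, …, α_n e_n} ⊆ ℝ^n, and let λ ≥ 0. Then Δ_n + λK is the convex hull of (Δ_n + λ P K) ∪ {(1 + λα_n) e_n}, where P is the orthogonal projection onto span{e_1,…,e_{n−1}}; that is, Δ_n + λK = conv( (Δ_n + λ conv{0, α_1 e_1, …, α_{n−1} e_{n−1}}) ∪ {(1 + λα_n) e_n} ). -/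
open MeasureTheory
open scoped Pointwise

noncomputable section

private theorem core {V : Type*} [AddCommGroup V] [Module ℝ V]
    {ι : Type*} [DecidableEq ι] (e : ι → V) (α : ι → ℝ) (hα0 : ∀ i, 0 ≤ α i) (m : ι)
    (hmax : ∀ i, α m ≤ α i) (l : ℝ) (hl : 0 ≤ l) :
    convexHull ℝ ((insert 0 (Set.range e)) + l • (insert 0 (Set.range fun i => α i • e i))) =
      convexHull ℝ
        (((insert 0 (Set.range e)) +
            l • (insert (0:V) (Set.range fun i => (if i = m then (0:ℝ) else α i) • e i))) ∪
          {(1 + l * α m) • e m}) := by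
  classical
  set c := l * α m with hc
  have hc0 : 0 ≤ c := mul_nonneg hl (hα0 m)
  have hc1 : (0:ℝ) < 1 + c := by linarith
  set S₀ : Set V := insert 0 (Set.range e) with hS
  set PK : Set V := insert (0:V) (Set.range fun i => (if i = m then (0:ℝ) else α i) • e i)
    with hPK
  set Kg : Set V := insert 0 (Set.range fun i => α i • e i) with hKg
  set p : V := (1 + c) • e m with hp
  set T : Set V := (S₀ + l • PK) ∪ {p} with hT
  have h0S : (0:V) ∈ S₀ := Set.mem_insert _ _
  have heS : ∀ i, e i ∈ S₀ := fun i => Set.mem_insert_of_mem _ ⟨i, rfl⟩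
  have h0P : (0:V) ∈ PK := Set.mem_insert _ _
  have hiP : ∀ i, i ≠ m → α i • e i ∈ PK := fun i hi =>
    Set.mem_insert_of_mem _ ⟨i, by simp [hi]⟩
  have hmemT : ∀ a ∈ S₀, ∀ y ∈ PK, a + l • y ∈ convexHull ℝ T := fun a ha y hy =>
    subset_convexHull ℝ _ (Or.inl (Set.add_mem_add ha (Set.smul_mem_smul_set hy)))
  have hpT : p ∈ convexHull ℝ T := subset_convexHull ℝ _ (Or.inr rfl)
  have h0T : (0:V) ∈ convexHull ℝ T := by simpa using hmemT 0 h0S 0 h0P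
  set t := c / (1 + c) with ht
  have htc : t * (1 + c) = c := div_mul_cancel₀ c hc1.ne'
  have ht0 : 0 ≤ t := div_nonneg hc0 hc1.le
  have ht1 : t ≤ 1 := by rw [ht, div_le_one hc1]; linarith
  have ht1' : (0:ℝ) ≤ 1 - t := by linarith
  have h1t : (1 - t) * (1 + c) = 1 := by nlinarith [htc]
  apply Set.Subset.antisymm
  · apply convexHull_min _ (convex_convexHull ℝ _)
    rintro x hx
    rw [Set.mem_add] at hx
    obtain ⟨a, ha, b, hb, rfl⟩ := hx
    obtain ⟨y, hy, rfl⟩ := Set.mem_smul_set.mp hb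
    rcases Set.mem_insert_iff.mp hy with rfl | ⟨j, rfl⟩
    · simpa using hmemT a ha 0 h0P
    · show a + l • (α j • e j) ∈ convexHull ℝ T
      by_cases hj : j = m
      · rw [hj]
        have hym : l • (α m • e m) = c • e m := by rw [smul_smul, hc]
        rcases Set.mem_insert_iff.mp ha with rfl | ⟨i, rfl⟩
        · have hkey : (0:V) + l • (α m • e m) = t • p + (1 - t) • (0:V) := by
            rw [zero_add, hym, smul_zero, add_zero, hp, smul_smul, htc]
          rw [hkey]
          exact (convex_convexHull ℝ T) hpT h0T ht0 ht1'
            (by ring : t + (1 - t) = 1)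
        · by_cases him : i = m
          · rw [him]
            have : e m + l • (α m • e m) = p := by
              rw [hym, hp, add_smul, one_smul]
            rw [this]; exact hpT
          · set d := l * α i with hd
            have hcd : c ≤ d := mul_le_mul_of_nonneg_left (hmax i) hl
            have hd1 : (0:ℝ) < 1 + d := by linarith
            set s := (1 + c) / (1 + d) with hs
            have hsd : s * (1 + d) = 1 + c := div_mul_cancel₀ _ hd1.ne'
            have hs0 : 0 ≤ s := div_nonneg hc1.le hd1.le
            have hs1 : s ≤ 1 := by rw [hs, div_le_one hd1]; linarith
            have hqT : e i + l • (α i • e i) ∈ convexHull ℝ T :=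
              hmemT (e i) (heS i) _ (hiP i him)
            have hz : ((1 + c) • e i : V) ∈ convexHull ℝ T := by
              have h := (convex_convexHull ℝ T) hqT h0T hs0 (sub_nonneg.mpr hs1)
                (by ring : s + (1 - s) = 1)
              have heq : s • (e i + l • (α i • e i)) + (1 - s) • (0:V) = (1 + c) • e i := by
                have h1 : e i + l • (α i • e i) = (1 + d) • e i := by
                  rw [smul_smul, ← hd, add_smul, one_smul]
                rw [h1, smul_zero, add_zero, smul_smul, hsd]
              rwa [heq] at h
            have e2 : t • p = c • e m := by rw [hp, smul_smul, htc]
            have e3 : (1 - t) • ((1 + c) • e i) = e i := by rw [smul_smul, h1t, one_smul]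
            have hfin : e i + l • (α m • e m) = t • p + (1 - t) • ((1 + c) • e i) := by
              rw [hym, e2, e3]; abel
            rw [hfin]
            exact (convex_convexHull ℝ T) hpT hz ht0 ht1' (by ring : t + (1 - t) = 1)
      · exact hmemT a ha _ (hiP j hj)
  · apply convexHull_min _ (convex_convexHull ℝ _)
    rintro x (hx | hx)
    · rw [Set.mem_add] at hx
      obtain ⟨a, ha, b, hb, rfl⟩ := hx
      obtain ⟨y, hy, rfl⟩ := Set.mem_smul_set.mp hb
      apply subset_convexHull ℝ _
      rcases Set.mem_insert_iff.mp hy with rfl | ⟨j, rfl⟩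
      · exact Set.add_mem_add ha (Set.smul_mem_smul_set (Set.mem_insert _ _))
      · show a + l • ((if j = m then (0:ℝ) else α j) • e j) ∈ S₀ + l • Kg
        by_cases hj : j = m
        · rw [if_pos hj, zero_smul]
          exact Set.add_mem_add ha (Set.smul_mem_smul_set (Set.mem_insert _ _))
        · rw [if_neg hj]
          exact Set.add_mem_add ha
            (Set.smul_mem_smul_set (Set.mem_insert_of_mem _ ⟨j, rfl⟩))
    · rw [Set.mem_singleton_iff] at hx
      subst hx
      apply subset_convexHull ℝ _
      rw [show p = e m + l • (α m • e m) by rw [smul_smul, ← hc, hp, add_smul, one_smul]]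
      exact Set.add_mem_add (heS m)
        (Set.smul_mem_smul_set (Set.mem_insert_of_mem _ ⟨m, rfl⟩))

noncomputable def projLin {n : ℕ} (m : Fin n) :
    EuclideanSpace ℝ (Fin n) →ₗ[ℝ] EuclideanSpace ℝ (Fin n) where
  toFun := coordProj (Finset.univ.erase m)
  map_add' x y := by
    ext i
    by_cases h : i ∈ Finset.univ.erase m <;> simp [coordProj, h] <;> split_ifs <;> simp
  map_smul' c x := by
    ext i
    by_cases h : i ∈ Finset.univ.erase m <;> simp [coordProj, h]

private theorem mainAux (n : ℕ) (α : Fin n → ℝ) (hα0 : ∀ i, 0 ≤ α i) (m : Fin n)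
    (hmax : ∀ i, α m ≤ α i) (l : ℝ) (hl : 0 ≤ l) :
    coordSimplex (Fin n) + l • convexHull ℝ
        (insert 0 (Set.range fun i => α i • EuclideanSpace.single i (1 : ℝ))) =
      convexHull ℝ
        ((coordSimplex (Fin n) +
            l • (coordProj (Finset.univ.erase m) ''
              convexHull ℝ
                (insert 0 (Set.range fun i => α i • EuclideanSpace.single i (1 : ℝ))))) ∪
          {(1 + l * α m) • EuclideanSpace.single m (1 : ℝ)}) := by
  classical
  have hP0 : coordProj (Finset.univ.erase m) (0 : EuclideanSpace ℝ (Fin n)) = 0 := by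
    ext i; simp [coordProj]
  have hPE : ∀ i, coordProj (Finset.univ.erase m) (α i • EuclideanSpace.single i (1:ℝ))
      = (if i = m then (0:ℝ) else α i) • EuclideanSpace.single i (1:ℝ) := by
    intro i
    ext j
    simp only [coordProj, PiLp.toLp_apply, PiLp.smul_apply, EuclideanSpace.single_apply, smul_eq_mul,
      Finset.mem_erase, Finset.mem_univ, and_true]
    by_cases hji : j = i
    · subst hji
      by_cases hjm : j = m <;> simp [hjm]
    · simp [hji]
  have himg : coordProj (Finset.univ.erase m) ''
      (insert 0 (Set.range fun i => α i • EuclideanSpace.single i (1:ℝ)))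
      = insert (0 : EuclideanSpace ℝ (Fin n))
          (Set.range fun i => (if i = m then (0:ℝ) else α i) • EuclideanSpace.single i (1:ℝ)) := by
    rw [Set.image_insert_eq, hP0, ← Set.range_comp]
    have hcomp : (coordProj (Finset.univ.erase m) ∘ fun i => α i • EuclideanSpace.single i (1:ℝ))
        = fun i => (if i = m then (0:ℝ) else α i) • EuclideanSpace.single i (1:ℝ) :=
      funext hPE
    rw [hcomp]
  have hlin : coordProj (Finset.univ.erase m) ''
      convexHull ℝ (insert 0 (Set.range fun i => α i • EuclideanSpace.single i (1:ℝ)))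
      = convexHull ℝ (insert (0 : EuclideanSpace ℝ (Fin n))
          (Set.range fun i => (if i = m then (0:ℝ) else α i) • EuclideanSpace.single i (1:ℝ))) := by
    rw [show coordProj (Finset.univ.erase m) = ⇑(projLin m) from rfl,
      (projLin m).image_convexHull]
    rw [show (⇑(projLin m) '' insert 0 (Set.range fun i => α i • EuclideanSpace.single i (1:ℝ)))
        = coordProj (Finset.univ.erase m) ''
            (insert 0 (Set.range fun i => α i • EuclideanSpace.single i (1:ℝ))) from rfl, himg]
  rw [coordSimplex, hlin, ← convexHull_smul, ← convexHull_smul, ← convexHull_add,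
    ← convexHull_add, convexHull_convexHull_union_left]
  exact core (fun i => EuclideanSpace.single i (1:ℝ)) α hα0 m hmax l hl

/-- For `α₁ ≥ … ≥ αₙ ≥ 0`, `K = conv{0, α₁e₁, …, αₙeₙ}` and `λ ≥ 0`,
`Δₙ + λK = conv((Δₙ + λPK) ∪ {(1 + λαₙ)eₙ})`, where `P` is the orthogonal projection onto
`span{e₁, …, e_{n-1}}`. -/
theorem simplex_add_smul_eq_convexHull
    (n : ℕ) (hn : 0 < n) (α : Fin n → ℝ) (hα0 : ∀ i, 0 ≤ α i) (hαmono : Antitone α)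
    (K : Set (EuclideanSpace ℝ (Fin n)))
    (hK : K = convexHull ℝ
      (insert 0 (Set.range fun i => α i • EuclideanSpace.single i (1 : ℝ))))
    (l : ℝ) (hl : 0 ≤ l) :
    coordSimplex (Fin n) + l • K =
      convexHull ℝ
        ((coordSimplex (Fin n) +
            l • (coordProj (Finset.univ.erase (⟨n - 1, by omega⟩ : Fin n)) '' K)) ∪
          {(1 + l * α ⟨n - 1, by omega⟩) •
            EuclideanSpace.single (⟨n - 1, by omega⟩ : Fin n) (1 : ℝ)}) := by
  subst hK
  exact mainAux n α hα0 ⟨n - 1, by omega⟩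
    (fun i => hαmono (Fin.le_def.mpr (Nat.le_pred_of_lt i.isLt))) l hl
end
end
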